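/- Let A be an ordered commutative ring and R a linearly ordered structure extending A in the language of ordered rings, such that A is unbounded in R (for every r ∈ R there is a ∈ A with a > r) and every F-definable subset of R satisfies the asymptotic dichotomy (for each such X there is r ∈ R with (r,∞) ⊆ X or (r,∞) ∩ X = ∅). Then A is an F-elementary substructure of R: for every F-formula φ and parameters ā from A, A ⊨ φ(ā) iff R ⊨ φ(ā). -/

import Mathlib

/-- Terms of the language `{+, ·, 0, 1}` with variables indexed by `ℕ`. -/
inductive OTerm : Type
  | var : ℕ → OTerm
  | zero : OTerm
  | one : OTerm
  | add : OTerm → OTerm → OTerm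
  | mul : OTerm → OTerm → OTerm
  deriving DecidableEq

/-- Evaluation of a term in any structure for the language `{+, ·, 0, 1}`. -/
def OTerm.eval {α : Type*} [Add α] [Mul α] [Zero α] [One α]
    (v : ℕ → α) : OTerm → α
  | .var i => v i
  | .zero => 0
  | .one => 1
  | .add t s => t.eval v + s.eval v
  | .mul t s => t.eval v * s.eval v

/-- The class `F` of formulas: quantifier-free formulas of the language
`{+, ·, <, 0, 1}` closed under Boolean connectives and the quantifier `Q`
("for all sufficiently large"), which binds the variable of the given index. -/
inductive FFormula : Type
  | eq : OTerm → OTerm → FFormula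
  | lt : OTerm → OTerm → FFormula
  | not : FFormula → FFormula
  | and : FFormula → FFormula → FFormula
  | or : FFormula → FFormula → FFormula
  | Q : ℕ → FFormula → FFormula
  deriving DecidableEq

/-- Satisfaction: `Q i φ` holds iff there is `z` such that `φ` holds whenever
the variable `i` is assigned any value `x > z`. -/
def FFormula.Sat (α : Type*) [Add α] [Mul α] [Zero α] [One α] [LT α]
    (v : ℕ → α) : FFormula → Prop
  | .eq t s => t.eval v = s.eval v
  | .lt t s => t.eval v < s.eval v
  | .not φ => ¬ φ.Sat α v
  | .and φ ψ => φ.Sat α v ∧ ψ.Sat α v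
  | .or φ ψ => φ.Sat α v ∨ ψ.Sat α v
  | .Q i φ => ∃ z : α, ∀ x : α, z < x → φ.Sat α (Function.update v i x)

/-- If `A` is an ordered commutative ring embedded (as an ordered-ring
substructure) in a linearly ordered structure `R` for the language of ordered
rings, `A` is unbounded in `R`, and every `F`-definable subset of `R` satisfies
the asymptotic dichotomy, then `A` is an `F`-elementary substructure of `R`. -/
theorem F_elementary_of_unbounded_asymptotic_dichotomy
    {A : Type*} [CommRing A] [LinearOrder A] [IsStrictOrderedRing A]
    {R : Type*} [Add R] [Mul R] [Zero R] [One R] [LinearOrder R]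
    (f : A → R)
    (hinj : Function.Injective f)
    (hadd : ∀ x y : A, f (x + y) = f x + f y)
    (hmul : ∀ x y : A, f (x * y) = f x * f y)
    (hzero : f 0 = 0) (hone : f 1 = 1)
    (hlt : ∀ x y : A, x < y ↔ f x < f y)
    (hunbounded : ∀ r : R, ∃ a : A, r < f a)
    (hdichotomy : ∀ (φ : FFormula) (v : ℕ → R) (i : ℕ), ∃ r : R,
      (∀ x : R, r < x → φ.Sat R (Function.update v i x)) ∨
      (∀ x : R, r < x → ¬ φ.Sat R (Function.update v i x)))
    (φ : FFormula) (v : ℕ → A) :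
    φ.Sat A v ↔ φ.Sat R (fun i => f (v i)) := by
  have heval : ∀ (t : OTerm) (v : ℕ → A), t.eval (fun i => f (v i)) = f (t.eval v) := by
    intro t v
    induction t with
    | var i => rfl
    | zero => simp [OTerm.eval, hzero]
    | one => simp [OTerm.eval, hone]
    | add t s ht hs => simp [OTerm.eval, hadd, ht, hs]
    | mul t s ht hs => simp [OTerm.eval, hmul, ht, hs]
  have hupd : ∀ (v : ℕ → A) (i : ℕ) (x : A),
      (fun j => f (Function.update v i x j)) = Function.update (fun j => f (v j)) i (f x) := by
    intro v i x
    funext j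
    by_cases h : j = i
    · subst h; simp
    · simp [Function.update_of_ne h]
  induction φ generalizing v with
  | eq t s =>
      simp only [FFormula.Sat, heval]
      exact ⟨fun h => by rw [h], fun h => hinj h⟩
  | lt t s =>
      simp only [FFormula.Sat, heval]
      exact (hlt _ _)
  | not φ ih => simp only [FFormula.Sat]; exact not_congr (ih v)
  | and φ ψ ihφ ihψ => simp only [FFormula.Sat]; exact and_congr (ihφ v) (ihψ v)
  | or φ ψ ihφ ihψ => simp only [FFormula.Sat]; exact or_congr (ihφ v) (ihψ v)
  | Q i φ ih =>
      simp only [FFormula.Sat]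
      constructor
      · rintro ⟨z, hz⟩
        obtain ⟨r, hr | hr⟩ := hdichotomy φ (fun j => f (v j)) i
        · exact ⟨r, hr⟩
        · exfalso
          obtain ⟨a₀, ha₀⟩ := hunbounded r
          set a := max z a₀ + 1 with ha
          have hza : z < a := lt_of_le_of_lt (le_max_left _ _) (lt_add_one _)
          have ha₀a : a₀ < a := lt_of_le_of_lt (le_max_right _ _) (lt_add_one _)
          have hsat : φ.Sat A (Function.update v i a) := hz a hza
          have hsatR : φ.Sat R (Function.update (fun j => f (v j)) i (f a)) := by
            rw [← hupd]; exact (ih _).mp hsat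
          exact hr (f a) (lt_trans ha₀ ((hlt _ _).mp ha₀a)) hsatR
      · rintro ⟨z, hz⟩
        obtain ⟨a, ha⟩ := hunbounded z
        refine ⟨a, fun x hx => ?_⟩
        have := hz (f x) (lt_trans ha ((hlt _ _).mp hx))
        rw [← hupd] at this
        exact (ih _).mpr this
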